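/- arXiv:2508.15913 — 2 statements merged into one kernel-verified Lean document; each statement's English description precedes it below -/
import Mathlib

section
/- Let H be a Hermitian operator on a finite-dimensional complex Hilbert space with spectral decomposition H = ∑_{μ∈ι} E_μ P_μ, let S ⊆ ι, P = ∑_{μ∈S} P_μ, and suppose E_μ ≠ E_ν for all μ ∈ S, ν ∉ S. If an operator A satisfies A = P A (1−P), then for every β > 0, I_{H,β}(A) = ∑_{μ∈S} ∑_{ν∉S} ((e^{−(E_μ−E_ν)²/(4β²)} − 1)/(i(E_μ − E_ν))) P_μ A P_ν. -/
open MeasureTheory Real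

/-- The Heisenberg time evolution `τ^H_s(A) = e^{isH} A e^{-isH}`. -/
noncomputable def heis {V : Type*} [NormedAddCommGroup V] [NormedSpace ℂ V]
    (H : V →L[ℂ] V) (s : ℝ) (A : V →L[ℂ] V) : V →L[ℂ] V :=
  NormedSpace.exp ((Complex.I * (s : ℂ)) • H) * A *
    NormedSpace.exp ((-(Complex.I * (s : ℂ))) • H)

/-- The Gaussian filter `φ_β(t) = (β/√π) e^{-β²t²}`. -/
noncomputable def phi (β t : ℝ) : ℝ := (β / Real.sqrt π) * Real.exp (-(β ^ 2 * t ^ 2))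

/-- The almost inverse Liouvillian `I_{H,β}(A) = ∫ φ_β(t) (∫_0^t τ^H_s(A) ds) dt`. -/
noncomputable def aiL {V : Type*} [NormedAddCommGroup V] [NormedSpace ℂ V]
    (H : V →L[ℂ] V) (β : ℝ) (A : V →L[ℂ] V) : V →L[ℂ] V :=
  ∫ t : ℝ, phi β t • (∫ s in (0:ℝ)..t, heis H s A)

section helpers
variable {V : Type*} [NormedAddCommGroup V] [InnerProductSpace ℂ V] [FiniteDimensional ℂ V]

lemma exp_mul_proj (H Q : V →L[ℂ] V) (e : ℂ) (hQ : H * Q = e • Q) (c : ℂ) :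
    NormedSpace.exp (c • H) * Q = Complex.exp (c * e) • Q := by
  have hpow : ∀ n : ℕ, (c • H) ^ n * Q = (c * e) ^ n • Q := by
    intro n
    induction n with
    | zero => simp
    | succ n ih =>
      rw [pow_succ, mul_assoc, smul_mul_assoc, hQ, smul_smul, pow_succ,
        mul_smul_comm, ih, smul_smul, mul_comm]
  rw [NormedSpace.exp_eq_tsum ℂ, ← (NormedSpace.expSeries_summable' (𝕂 := ℂ) (c • H)).tsum_mul_right]
  have h1 : ∀ n : ℕ, (((n.factorial : ℂ))⁻¹ • (c • H) ^ n) * Q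
      = (((n.factorial : ℂ))⁻¹ • (c * e) ^ n) • Q := by
    intro n
    rw [smul_mul_assoc, hpow, smul_smul, smul_eq_mul]
  simp_rw [h1]
  rw [(NormedSpace.expSeries_summable' (𝕂 := ℂ) (c * e)).tsum_smul_const,
    Complex.exp_eq_exp_ℂ, NormedSpace.exp_eq_tsum ℂ]

lemma proj_mul_exp (H Q : V →L[ℂ] V) (e : ℂ) (hQ : Q * H = e • Q) (c : ℂ) :
    Q * NormedSpace.exp (c • H) = Complex.exp (c * e) • Q := by
  have hpow : ∀ n : ℕ, Q * (c • H) ^ n = (c * e) ^ n • Q := by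
    intro n
    induction n with
    | zero => simp
    | succ n ih =>
      rw [pow_succ', ← mul_assoc, mul_smul_comm, hQ, smul_smul, pow_succ',
        smul_mul_assoc, ih, smul_smul, mul_comm]
  rw [NormedSpace.exp_eq_tsum ℂ, ← (NormedSpace.expSeries_summable' (𝕂 := ℂ) (c • H)).tsum_mul_left]
  have h1 : ∀ n : ℕ, Q * (((n.factorial : ℂ))⁻¹ • (c • H) ^ n)
      = (((n.factorial : ℂ))⁻¹ • (c * e) ^ n) • Q := by
    intro n
    rw [mul_smul_comm, hpow, smul_smul, smul_eq_mul]
  simp_rw [h1]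
  rw [(NormedSpace.expSeries_summable' (𝕂 := ℂ) (c * e)).tsum_smul_const,
    Complex.exp_eq_exp_ℂ, NormedSpace.exp_eq_tsum ℂ]

lemma heis_block (H Pm Pn A' : V →L[ℂ] V) (em en : ℂ)
    (h1 : H * Pm = em • Pm) (h2 : Pn * H = en • Pn) (s : ℝ) :
    heis H s (Pm * A' * Pn)
      = Complex.exp ((Complex.I * (em - en)) * s) • (Pm * A' * Pn) := by
  unfold heis
  have hX := exp_mul_proj H Pm em h1 (Complex.I * s)
  have hY := proj_mul_exp H Pn en h2 (-(Complex.I * s))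
  calc NormedSpace.exp ((Complex.I * (s:ℂ)) • H) * (Pm * A' * Pn) *
        NormedSpace.exp ((-(Complex.I * (s:ℂ))) • H)
      = (NormedSpace.exp ((Complex.I * (s:ℂ)) • H) * Pm) *
          (A' * (Pn * NormedSpace.exp ((-(Complex.I * (s:ℂ))) • H))) := by
        simp only [mul_assoc]
    _ = (Complex.exp (Complex.I * s * em) • Pm) *
          (A' * (Complex.exp (-(Complex.I * s) * en) • Pn)) := by rw [hX, hY]
    _ = (Complex.exp (Complex.I * s * em) * Complex.exp (-(Complex.I * s) * en)) •
          (Pm * A' * Pn) := by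
        simp only [smul_mul_assoc, mul_smul_comm, smul_smul, mul_assoc]
        congr 1
        ring
    _ = Complex.exp ((Complex.I * (em - en)) * s) • (Pm * A' * Pn) := by
        rw [← Complex.exp_add]
        congr 1
        ring

end helpers

section scalar

lemma sqrt_pi_div {β : ℝ} (hβ : 0 < β) : Real.sqrt (π / β ^ 2) = Real.sqrt π / β := by
  rw [Real.sqrt_div pi_nonneg, Real.sqrt_sq hβ.le]

lemma phi_integrable {β : ℝ} (hβ : 0 < β) : Integrable (phi β) := by
  have : Integrable (fun t : ℝ => Real.exp (-(β ^ 2) * t ^ 2)) :=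
    integrable_exp_neg_mul_sq (by positivity)
  refine (this.const_mul (β / Real.sqrt π)).congr (Filter.Eventually.of_forall fun t => ?_)
  simp [phi, neg_mul]

lemma phi_integral {β : ℝ} (hβ : 0 < β) : ∫ t : ℝ, phi β t = 1 := by
  have h : ∫ t : ℝ, Real.exp (-(β ^ 2) * t ^ 2) = Real.sqrt (π / β ^ 2) :=
    integral_gaussian (β ^ 2)
  simp only [phi, ← neg_mul]
  rw [integral_const_mul, h, sqrt_pi_div hβ, div_mul_div_comm, mul_comm]
  exact div_self (by positivity)

lemma hbre {β : ℝ} (hβ : 0 < β) : (0:ℝ) < ((β : ℂ) ^ 2).re := by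
  rw [← Complex.ofReal_pow, Complex.ofReal_re]
  positivity

lemma phi_mul_exp_integrable {β : ℝ} (hβ : 0 < β) (Δ : ℝ) :
    Integrable (fun t : ℝ => (phi β t : ℂ) * Complex.exp (Complex.I * Δ * t)) := by
  have key : Integrable (fun t : ℝ =>
      ((β / Real.sqrt π : ℝ) : ℂ) *
        Complex.exp (-(β : ℂ) ^ 2 * t ^ 2 + (Complex.I * Δ) * t + 0)) :=
    (integrable_cexp_quadratic (hbre hβ) _ _).const_mul _
  refine key.congr (Filter.Eventually.of_forall fun t => ?_)
  simp only [phi]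
  have harg : -(β:ℂ)^2 * (t:ℂ)^2 + (Complex.I * Δ) * t + 0
      = ((-(β^2*t^2) : ℝ) : ℂ) + Complex.I * Δ * t := by push_cast; ring
  rw [harg, Complex.exp_add, ← Complex.ofReal_exp, ← mul_assoc]
  push_cast
  ring

lemma phi_fourier {β : ℝ} (hβ : 0 < β) (Δ : ℝ) :
    ∫ t : ℝ, (phi β t : ℂ) * Complex.exp (Complex.I * Δ * t) =
      ((Real.exp (-(Δ ^ 2 / (4 * β ^ 2))) : ℝ) : ℂ) := by
  have key := fourierIntegral_gaussian (b := (β : ℂ) ^ 2) (hbre hβ) (Δ : ℂ)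
  have h1 : ∀ t : ℝ, (phi β t : ℂ) * Complex.exp (Complex.I * Δ * t) =
      ((β / Real.sqrt π : ℝ) : ℂ) *
        (Complex.exp (Complex.I * Δ * t) * Complex.exp (-(β : ℂ) ^ 2 * t ^ 2)) := by
    intro t
    simp only [phi]
    push_cast
    ring_nf
  simp_rw [h1]
  rw [integral_const_mul, key, ← mul_assoc]
  have hconst : ((β / Real.sqrt π : ℝ) : ℂ) * ((π : ℂ) / (β : ℂ) ^ 2) ^ (1 / 2 : ℂ) = 1 := by
    have h0 : (0:ℝ) ≤ π / β ^ 2 := by positivity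
    have e1 : ((π:ℂ) / (β:ℂ) ^ 2) = ((π / β ^ 2 : ℝ) : ℂ) := by push_cast; ring
    have e2 : ((1/2 : ℝ) : ℂ) = (1/2 : ℂ) := by norm_num
    rw [e1, ← e2, ← Complex.ofReal_cpow h0, ← Real.sqrt_eq_rpow, sqrt_pi_div hβ,
      ← Complex.ofReal_mul, div_mul_div_comm, mul_comm]
    rw [div_self (by positivity)]
    norm_num
  rw [hconst, one_mul, Complex.ofReal_exp]
  congr 1
  push_cast
  ring

end scalar

theorem stmt8 {V : Type*} [NormedAddCommGroup V] [InnerProductSpace ℂ V]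
    [FiniteDimensional ℂ V]
    {ι : Type*} [Fintype ι] [DecidableEq ι] (E : ι → ℝ) (Pr : ι → (V →L[ℂ] V))
    (hPsa : ∀ μ, IsSelfAdjoint (Pr μ))
    (hPidem : ∀ μ, Pr μ * Pr μ = Pr μ)
    (hPorth : ∀ μ ν, μ ≠ ν → Pr μ * Pr ν = 0)
    (hPsum : ∑ μ, Pr μ = 1)
    (H : V →L[ℂ] V) (hH : H = ∑ μ, (E μ : ℂ) • Pr μ)
    (S : Finset ι) (P : V →L[ℂ] V) (hP : P = ∑ μ ∈ S, Pr μ)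
    (hne : ∀ μ ∈ S, ∀ ν ∉ S, E μ ≠ E ν)
    (A : V →L[ℂ] V) (hA : A = P * A * (1 - P))
    (β : ℝ) (hβ : 0 < β) :
    aiL H β A =
      ∑ μ ∈ S, ∑ ν ∈ Sᶜ,
        (((Real.exp (-((E μ - E ν) ^ 2 / (4 * β ^ 2))) - 1 : ℝ) : ℂ) /
            (Complex.I * ((E μ : ℂ) - (E ν : ℂ)))) • (Pr μ * A * Pr ν) := by
  classical
  have hHP : ∀ μ, H * Pr μ = (E μ : ℂ) • Pr μ := by
    intro μ
    rw [hH, Finset.sum_mul, Finset.sum_eq_single μ]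
    · rw [smul_mul_assoc, hPidem]
    · intro ν _ hν
      rw [smul_mul_assoc, hPorth ν μ hν, smul_zero]
    · intro h
      exact absurd (Finset.mem_univ μ) h
  have hPH : ∀ μ, Pr μ * H = (E μ : ℂ) • Pr μ := by
    intro μ
    rw [hH, Finset.mul_sum, Finset.sum_eq_single μ]
    · rw [mul_smul_comm, hPidem]
    · intro ν _ hν
      rw [mul_smul_comm, hPorth μ ν (Ne.symm hν), smul_zero]
    · intro h
      exact absurd (Finset.mem_univ μ) h
  set M : ι → ι → (V →L[ℂ] V) := fun μ ν => Pr μ * A * Pr ν with hM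
  set Δ : ι → ι → ℂ := fun μ ν => (E μ : ℂ) - (E ν : ℂ) with hΔ
  have hΔne : ∀ μ ∈ S, ∀ ν ∈ Sᶜ, Complex.I * Δ μ ν ≠ 0 := by
    intro μ hμ ν hν
    refine mul_ne_zero Complex.I_ne_zero (sub_ne_zero.mpr ?_)
    exact fun h => hne μ hμ ν (Finset.mem_compl.mp hν) (Complex.ofReal_inj.mp h)
  -- decomposition of A
  have hA' : A = ∑ μ ∈ S, ∑ ν ∈ Sᶜ, M μ ν := by
    have h1 : (1 : V →L[ℂ] V) - ∑ μ ∈ S, Pr μ = ∑ ν ∈ Sᶜ, Pr ν := by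
      rw [← hPsum, ← Finset.sum_add_sum_compl S Pr, add_sub_cancel_left]
    calc A = (∑ μ ∈ S, Pr μ) * A * ((1 : V →L[ℂ] V) - ∑ μ ∈ S, Pr μ) := by
            rw [← hP]; exact hA
      _ = (∑ μ ∈ S, Pr μ * A) * (∑ ν ∈ Sᶜ, Pr ν) := by rw [h1, Finset.sum_mul]
      _ = ∑ μ ∈ S, ∑ ν ∈ Sᶜ, M μ ν := by rw [Finset.sum_mul_sum]
  -- Heisenberg evolution expanded
  have hstep : ∀ s : ℝ, heis H s A
      = ∑ μ ∈ S, ∑ ν ∈ Sᶜ, Complex.exp ((Complex.I * Δ μ ν) * s) • M μ ν := by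
    intro s
    conv_lhs => rw [hA']
    unfold heis
    simp only [Finset.mul_sum, Finset.sum_mul]
    refine Finset.sum_congr rfl fun μ _ => Finset.sum_congr rfl fun ν _ => ?_
    exact heis_block H (Pr μ) (Pr ν) A (E μ) (E ν) (hHP μ) (hPH ν) s
  -- inner interval integral
  have hcont : ∀ (c : ℂ) (B : V →L[ℂ] V),
      Continuous (fun s : ℝ => Complex.exp (c * s) • B) := by
    intro c B
    exact (Complex.continuous_exp.comp (continuous_const.mul Complex.continuous_ofReal)).smul
      continuous_const
  have hinner : ∀ t : ℝ, (∫ s in (0:ℝ)..t, heis H s A)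
      = ∑ μ ∈ S, ∑ ν ∈ Sᶜ,
          ((Complex.exp ((Complex.I * Δ μ ν) * t) - 1) / (Complex.I * Δ μ ν)) • M μ ν := by
    intro t
    simp_rw [hstep]
    rw [intervalIntegral.integral_finset_sum]
    · refine Finset.sum_congr rfl fun μ hμ => ?_
      rw [intervalIntegral.integral_finset_sum]
      · refine Finset.sum_congr rfl fun ν hν => ?_
        rw [intervalIntegral.integral_smul_const,
          integral_exp_mul_complex (hΔne μ hμ ν hν)]
        simp [Complex.ofReal_zero, mul_zero, Complex.exp_zero]
      · intro ν _
        exact ((hcont _ _).intervalIntegrable _ _)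
    · intro μ _
      exact (continuous_finset_sum _ fun ν _ => hcont _ _).intervalIntegrable _ _
  -- outer integral
  have hout : ∀ t : ℝ, phi β t • (∫ s in (0:ℝ)..t, heis H s A)
      = ∑ μ ∈ S, ∑ ν ∈ Sᶜ,
          ((phi β t : ℂ) * ((Complex.exp ((Complex.I * Δ μ ν) * t) - 1) / (Complex.I * Δ μ ν)))
            • M μ ν := by
    intro t
    rw [hinner t, ← Complex.coe_smul (phi β t), Finset.smul_sum]
    refine Finset.sum_congr rfl fun μ _ => ?_
    rw [Finset.smul_sum]
    refine Finset.sum_congr rfl fun ν _ => ?_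
    rw [smul_smul]
  -- integrability of the coefficients
  have hc2 : ∀ μ ν, ((E μ - E ν : ℝ) : ℂ) = Δ μ ν := by
    intro μ ν
    simp only [hΔ]
    push_cast
    ring
  have heq : ∀ μ ν, ∀ t : ℝ, (phi β t : ℂ) *
      ((Complex.exp ((Complex.I * Δ μ ν) * t) - 1) / (Complex.I * Δ μ ν))
      = ((phi β t : ℂ) * Complex.exp (Complex.I * ((E μ - E ν : ℝ) : ℂ) * t) - (phi β t : ℂ))
          * (Complex.I * ((E μ - E ν : ℝ) : ℂ))⁻¹ := by
    intro μ ν t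
    rw [hc2 μ ν, div_eq_mul_inv]
    ring
  have hint : ∀ μ ν, Integrable (fun t : ℝ =>
      (phi β t : ℂ) * ((Complex.exp ((Complex.I * Δ μ ν) * t) - 1) / (Complex.I * Δ μ ν))) := by
    intro μ ν
    have h1 : Integrable (fun t : ℝ =>
        ((phi β t : ℂ) * Complex.exp (Complex.I * ((E μ - E ν : ℝ) : ℂ) * t) - (phi β t : ℂ))
          * (Complex.I * ((E μ - E ν : ℝ) : ℂ))⁻¹) :=
      ((phi_mul_exp_integrable hβ (E μ - E ν)).sub
        ((phi_integrable hβ).ofReal)).mul_const _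
    exact h1.congr (Filter.Eventually.of_forall fun t => (heq μ ν t).symm)
  -- compute the coefficient integrals
  have hcoeff : ∀ μ ν, (∫ t : ℝ,
      (phi β t : ℂ) * ((Complex.exp ((Complex.I * Δ μ ν) * t) - 1) / (Complex.I * Δ μ ν)))
      = ((Real.exp (-((E μ - E ν) ^ 2 / (4 * β ^ 2))) - 1 : ℝ) : ℂ) / (Complex.I * Δ μ ν) := by
    intro μ ν
    have h2 : Integrable (fun t : ℝ => ((phi β t : ℝ) : ℂ)) := (phi_integrable hβ).ofReal
    have h3 : (∫ t : ℝ, ((phi β t : ℝ) : ℂ)) = 1 := by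
      have h4 := integral_ofReal (𝕜 := ℂ) (f := phi β) (μ := volume)
      rw [show (RCLike.ofReal : ℝ → ℂ) = Complex.ofReal from rfl] at h4
      rw [h4, phi_integral hβ, Complex.ofReal_one]
    simp_rw [heq μ ν]
    rw [integral_mul_const,
      integral_sub (phi_mul_exp_integrable hβ (E μ - E ν)) h2,
      phi_fourier hβ (E μ - E ν), h3, ← hc2 μ ν, div_eq_mul_inv]
    push_cast
    ring
  -- conclusion
  rw [aiL]
  simp_rw [hout]
  rw [integral_finset_sum _ fun μ _ =>
      integrable_finset_sum _ fun ν _ => ((hint μ ν).smul_const _)]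
  refine Finset.sum_congr rfl fun μ hμ => ?_
  rw [integral_finset_sum _ fun ν _ => ((hint μ ν).smul_const _)]
  refine Finset.sum_congr rfl fun ν hν => ?_
  rw [integral_smul_const, hcoeff μ ν]
end

section
/- Let H be a Hermitian operator on a finite-dimensional complex Hilbert space with spectral decomposition H = ∑_{μ∈ι} E_μ P_μ, let S ⊆ ι, let γ > 0 and 0 ≤ Δ < γ/4 be such that E_ν − E_μ ≤ Δ for all μ, ν ∈ S and E_ν − E_μ ≥ γ for all μ ∈ S, ν ∉ S. Then for every operator A and every β > 0, ‖∑_{μ∈S} ∑_{ν∉S} P_μ A P_ν − ∑_{μ∈S} ∑_{ν∈ι} G_{β,γ}(E_ν − E_μ) P_μ A P_ν‖ ≤ (6|S|/√π)·(β/γ)·e^{−γ²/(64β²)}·‖A‖. -/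
open MeasureTheory Real

/-- `G_{β,γ}(ω) = (1/√π) ∫_{-∞}^{(ω-γ/2)/(2β)} e^{-x²} dx`, the convolution of a step
function at `γ/2` with the Gaussian filter. -/
noncomputable def G (β γ ω : ℝ) : ℝ :=
  (1 / Real.sqrt π) * ∫ x in Set.Iio ((ω - γ / 2) / (2 * β)), Real.exp (-(x ^ 2))

section GaussianLemmas

lemma Gproof.intg : Integrable (fun x : ℝ => Real.exp (-(x^2))) := by
  simpa [neg_mul] using integrable_exp_neg_mul_sq (one_pos)

lemma Gproof.intg_mul : Integrable (fun x : ℝ => x * Real.exp (-(x^2))) := by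
  simpa [neg_mul] using integrable_mul_exp_neg_mul_sq (one_pos)

lemma Gproof.intg_full : (∫ x : ℝ, Real.exp (-(x^2))) = Real.sqrt π := by
  simpa [neg_mul] using integral_gaussian 1

open Gproof in
lemma Gproof.tail_eq {a : ℝ} :
    ∫ x in Set.Ioi a, x * Real.exp (-(x^2)) = Real.exp (-(a^2)) / 2 := by
  have := integral_Ioi_of_hasDerivAt_of_tendsto
    (f := fun x : ℝ => -Real.exp (-(x^2)) / 2) (f' := fun x : ℝ => x * Real.exp (-(x^2)))
    (a := a) (m := 0) ?_ ?_ ?_ ?_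
  · rw [this]; ring
  · exact (((Real.differentiable_exp.comp
      (by fun_prop)).neg.div_const 2).continuous).continuousWithinAt
  · intro x hx
    have h0 : HasDerivAt (fun x : ℝ => -(x^2)) (-(2*x)) x := by
      simpa using (hasDerivAt_pow 2 x).fun_neg
    have h1 : HasDerivAt (fun x : ℝ => Real.exp (-(x^2))) (Real.exp (-(x^2)) * -(2*x)) x :=
      h0.exp
    have h2 := (h1.fun_neg).div_const 2
    exact h2.congr_deriv (by ring)
  · exact intg_mul.integrableOn
  · have h1 : Filter.Tendsto (fun x : ℝ => Real.exp (-(x^2))) Filter.atTop (nhds 0) := by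
      apply Real.tendsto_exp_atBot.comp
      exact Filter.tendsto_neg_atBot_iff.mpr (Filter.tendsto_pow_atTop two_ne_zero)
    have := (h1.neg.div_const 2)
    simpa using this

open Gproof in
lemma Gproof.tail_le {a : ℝ} (ha : 0 < a) :
    ∫ x in Set.Ioi a, Real.exp (-(x^2)) ≤ Real.exp (-(a^2)) / (2*a) := by
  have h1 : ∫ x in Set.Ioi a, Real.exp (-(x^2))
      ≤ ∫ x in Set.Ioi a, (x/a) * Real.exp (-(x^2)) := by
    have heq : (fun x : ℝ => (x/a) * Real.exp (-(x^2)))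
        = fun x : ℝ => a⁻¹ * (x * Real.exp (-(x^2))) := by
      ext x; ring
    apply setIntegral_mono_on intg.integrableOn
      (by rw [heq]; exact (intg_mul.const_mul a⁻¹).integrableOn) measurableSet_Ioi
    intro x hx
    have : (1:ℝ) ≤ x/a := (le_div_iff₀ ha).mpr (by simpa using (le_of_lt hx))
    nlinarith [Real.exp_pos (-(x^2))]
  have h2 : ∫ x in Set.Ioi a, (x/a) * Real.exp (-(x^2))
      = (1/a) * ∫ x in Set.Ioi a, x * Real.exp (-(x^2)) := by
    rw [← integral_const_mul]
    congr 1; ext x; ring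
  rw [h2, tail_eq] at h1
  calc ∫ x in Set.Ioi a, Real.exp (-(x^2)) ≤ (1/a) * (Real.exp (-(a^2))/2) := h1
  _ = Real.exp (-(a^2)) / (2*a) := by field_simp

open Gproof in
lemma Gproof.iio_neg (a : ℝ) :
    ∫ x in Set.Iio (-a), Real.exp (-(x^2)) = ∫ x in Set.Ioi a, Real.exp (-(x^2)) := by
  rw [← integral_Iic_eq_integral_Iio, ← integral_comp_neg_Ioi]
  simp only [neg_sq]

open Gproof in
lemma Gproof.G_nonneg (β γ ω : ℝ) : 0 ≤ G β γ ω := by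
  apply mul_nonneg (by positivity)
  exact setIntegral_nonneg measurableSet_Iio (fun x _ => (Real.exp_pos _).le)

open Gproof in
lemma Gproof.G_le_one (β γ ω : ℝ) : G β γ ω ≤ 1 := by
  have h : ∫ x in Set.Iio ((ω - γ / 2) / (2 * β)), Real.exp (-(x^2)) ≤ Real.sqrt π := by
    rw [← intg_full]
    exact setIntegral_le_integral intg (Filter.Eventually.of_forall fun x => (Real.exp_pos _).le)
  calc G β γ ω ≤ (1 / Real.sqrt π) * Real.sqrt π := by
        apply mul_le_mul_of_nonneg_left h (by positivity)
  _ = 1 := by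
        have : Real.sqrt π ≠ 0 := ne_of_gt (Real.sqrt_pos.mpr pi_pos)
        field_simp

open Gproof in
lemma Gproof.G_le {β γ ω : ℝ} (hβ : 0 < β) (hγ : 0 < γ) (hω : ω ≤ γ/4) :
    G β γ ω ≤ 4 * (β/γ) / Real.sqrt π * Real.exp (-(γ^2/(64*β^2))) := by
  set a := γ/(8*β) with ha
  have ha0 : 0 < a := by positivity
  have ht : (ω - γ/2)/(2*β) ≤ -a := by
    have h' : (ω - γ/2)/(2*β) ≤ (-(γ/4))/(2*β) := by
      apply div_le_div_of_nonneg_right ?_ (by positivity)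
      linarith
    have h'' : (-(γ/4))/(2*β) = -a := by rw [ha]; ring
    linarith
  have h1 : ∫ x in Set.Iio ((ω - γ/2)/(2*β)), Real.exp (-(x^2))
      ≤ ∫ x in Set.Iio (-a), Real.exp (-(x^2)) := by
    apply setIntegral_mono_set intg.integrableOn
      (Filter.Eventually.of_forall fun x => (Real.exp_pos _).le)
      (HasSubset.Subset.eventuallyLE (Set.Iio_subset_Iio ht))
  have h2 : Real.exp (-(a^2)) / (2*a) = 4 * (β/γ) * Real.exp (-(γ^2/(64*β^2))) := by
    rw [ha]
    have : (γ/(8*β))^2 = γ^2/(64*β^2) := by ring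
    rw [this]
    field_simp
    ring
  have := le_trans h1 ((iio_neg a) ▸ tail_le ha0)
  rw [h2] at this
  calc G β γ ω ≤ (1 / Real.sqrt π) * (4 * (β/γ) * Real.exp (-(γ^2/(64*β^2)))) :=
        mul_le_mul_of_nonneg_left this (by positivity)
  _ = 4 * (β/γ) / Real.sqrt π * Real.exp (-(γ^2/(64*β^2))) := by ring

open Gproof in
lemma Gproof.one_sub_G_le {β γ ω : ℝ} (hβ : 0 < β) (hγ : 0 < γ) (hω : γ ≤ ω) :
    1 - G β γ ω ≤ 2 * (β/γ) / Real.sqrt π * Real.exp (-(γ^2/(64*β^2))) := by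
  set t := (ω - γ/2)/(2*β) with htdef
  set b := γ/(4*β) with hb
  have hb0 : 0 < b := by positivity
  have hbt : b ≤ t := by
    rw [hb, htdef, div_le_div_iff₀ (by positivity) (by positivity)]
    nlinarith
  have hsplit : Real.sqrt π - (∫ x in Set.Iio t, Real.exp (-(x^2)))
      = ∫ x in Set.Ioi t, Real.exp (-(x^2)) := by
    have := intervalIntegral.integral_Iic_add_Ioi (b := t) (μ := volume)
      (f := fun x : ℝ => Real.exp (-(x^2))) intg.integrableOn intg.integrableOn
    rw [intg_full] at this
    rw [← integral_Iic_eq_integral_Iio]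
    linarith
  have h1 : ∫ x in Set.Ioi t, Real.exp (-(x^2)) ≤ ∫ x in Set.Ioi b, Real.exp (-(x^2)) :=
    setIntegral_mono_set intg.integrableOn
      (Filter.Eventually.of_forall fun x => (Real.exp_pos _).le)
      (HasSubset.Subset.eventuallyLE (Set.Ioi_subset_Ioi hbt))
  have h2 : Real.exp (-(b^2)) / (2*b) ≤ 2 * (β/γ) * Real.exp (-(γ^2/(64*β^2))) := by
    rw [hb]
    have e1 : (γ/(4*β))^2 = γ^2/(16*β^2) := by ring
    have e2 : Real.exp (-(γ^2/(16*β^2))) ≤ Real.exp (-(γ^2/(64*β^2))) := by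
      apply Real.exp_le_exp.mpr
      have : γ^2/(64*β^2) ≤ γ^2/(16*β^2) := by
        apply div_le_div_of_nonneg_left (by positivity) (by positivity) (by nlinarith)
      linarith
    rw [e1]
    calc Real.exp (-(γ^2/(16*β^2))) / (2*(γ/(4*β)))
        = 2*(β/γ) * Real.exp (-(γ^2/(16*β^2))) := by field_simp; ring
    _ ≤ 2*(β/γ) * Real.exp (-(γ^2/(64*β^2))) := by
          apply mul_le_mul_of_nonneg_left e2 (by positivity)
  have hs : Real.sqrt π ≠ 0 := ne_of_gt (Real.sqrt_pos.mpr pi_pos)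
  have key : 1 - G β γ ω = (1 / Real.sqrt π) * ∫ x in Set.Ioi t, Real.exp (-(x^2)) := by
    rw [G, show ((ω - γ / 2) / (2 * β)) = t from htdef.symm, ← hsplit, mul_sub, one_div,
      inv_mul_cancel₀ hs]
  rw [key]
  calc (1 / Real.sqrt π) * ∫ x in Set.Ioi t, Real.exp (-(x^2))
      ≤ (1 / Real.sqrt π) * (2 * (β/γ) * Real.exp (-(γ^2/(64*β^2)))) := by
        apply mul_le_mul_of_nonneg_left (le_trans h1 (le_trans (tail_le hb0) h2)) (by positivity)
  _ = 2 * (β/γ) / Real.sqrt π * Real.exp (-(γ^2/(64*β^2))) := by ring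

end GaussianLemmas

section OperatorLemmas

variable {V : Type*} [NormedAddCommGroup V] [InnerProductSpace ℂ V] [FiniteDimensional ℂ V]

omit [FiniteDimensional ℂ V] in
lemma Gproof.pyth {ι : Type*} [Fintype ι] [DecidableEq ι] (f : ι → V)
    (h : ∀ μ ν, μ ≠ ν → (inner ℂ (f μ) (f ν) : ℂ) = 0) :
    ‖∑ ν, f ν‖^2 = ∑ ν, ‖f ν‖^2 := by
  have h1 : (inner ℂ (∑ μ, f μ) (∑ ν, f ν) : ℂ) = ∑ μ, ∑ ν, (inner ℂ (f μ) (f ν) : ℂ) := by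
    rw [sum_inner]
    exact Finset.sum_congr rfl fun μ _ => inner_sum _ _ _
  have h2 : ∀ μ ∈ Finset.univ, ∑ ν, (inner ℂ (f μ) (f ν) : ℂ) = inner ℂ (f μ) (f μ) :=
    fun μ _ => Finset.sum_eq_single_of_mem μ (Finset.mem_univ μ)
      (fun ν _ hne => h μ ν hne.symm)
  rw [← inner_self_eq_norm_sq (𝕜 := ℂ), h1, Finset.sum_congr rfl h2, map_sum]
  exact Finset.sum_congr rfl fun ν _ => inner_self_eq_norm_sq (𝕜 := ℂ) _

lemma Gproof.proj_norm_le (P : V →L[ℂ] V) (hsa : IsSelfAdjoint P) (hid : P * P = P) :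
    ‖P‖ ≤ 1 := by
  refine P.opNorm_le_bound zero_le_one fun v => ?_
  rw [one_mul]
  rcases eq_or_lt_of_le (norm_nonneg (P v)) with h0 | h0
  · rw [← h0]; exact norm_nonneg v
  have h1 : ‖P v‖^2 = RCLike.re (inner (𝕜 := ℂ) (P v) (P v)) := (inner_self_eq_norm_sq _).symm
  have h2 : (inner ℂ (P v) (P v) : ℂ) = inner ℂ v (P v) := by
    calc (inner ℂ (P v) (P v) : ℂ) = inner ℂ v (P (P v)) := hsa.isSymmetric v (P v)
    _ = inner ℂ v (P v) := by rw [show P (P v) = (P * P) v from rfl, hid]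
  have h3 : RCLike.re (inner (𝕜 := ℂ) v (P v)) ≤ ‖v‖ * ‖P v‖ := re_inner_le_norm _ _
  rw [h2] at h1
  nlinarith

open Gproof in
lemma Gproof.sum_smul_proj_norm_le {ι : Type*} [Fintype ι] [DecidableEq ι]
    (Pr : ι → (V →L[ℂ] V)) (hPsa : ∀ μ, IsSelfAdjoint (Pr μ))
    (hPorth : ∀ μ ν, μ ≠ ν → Pr μ * Pr ν = 0) (hPsum : ∑ μ, Pr μ = 1)
    (c : ι → ℝ) (M : ℝ) (hM0 : 0 ≤ M) (hM : ∀ ν, |c ν| ≤ M) :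
    ‖∑ ν, (c ν : ℂ) • Pr ν‖ ≤ M := by
  refine ContinuousLinearMap.opNorm_le_bound _ hM0 fun v => ?_
  have horth : ∀ μ ν, μ ≠ ν → (inner ℂ (Pr μ v) (Pr ν v) : ℂ) = 0 := by
    intro μ ν hne
    calc (inner ℂ (Pr μ v) (Pr ν v) : ℂ)
        = inner ℂ v (Pr μ (Pr ν v)) := (hPsa μ).isSymmetric v (Pr ν v)
    _ = inner ℂ v ((Pr μ * Pr ν) v) := rfl
    _ = 0 := by rw [hPorth μ ν hne]; simp
  set f : ι → V := fun ν => (c ν : ℂ) • Pr ν v with hf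
  have horthf : ∀ μ ν, μ ≠ ν → (inner ℂ (f μ) (f ν) : ℂ) = 0 := by
    intro μ ν hne
    simp only [hf, inner_smul_left, inner_smul_right, horth μ ν hne, mul_zero]
  have h1 : ‖∑ ν, f ν‖^2 = ∑ ν, ‖f ν‖^2 := pyth f horthf
  have h2 : ∑ ν, ‖f ν‖^2 ≤ M^2 * ∑ ν, ‖Pr ν v‖^2 := by
    rw [Finset.mul_sum]
    apply Finset.sum_le_sum
    intro ν _
    have he : ‖f ν‖ = |c ν| * ‖Pr ν v‖ := by
      simp [hf, norm_smul]
    rw [he, mul_pow]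
    exact mul_le_mul_of_nonneg_right (pow_le_pow_left₀ (abs_nonneg _) (hM ν) 2) (by positivity)
  have hv : ∑ ν, Pr ν v = v := by
    calc ∑ ν, Pr ν v = (∑ ν, Pr ν) v := (ContinuousLinearMap.sum_apply _ _ _).symm
    _ = v := by rw [hPsum]; rfl
  have h3 : ∑ ν, ‖Pr ν v‖^2 = ‖v‖^2 := by
    rw [← pyth (fun ν => Pr ν v) horth, hv]
  have happ : (∑ ν, (c ν : ℂ) • Pr ν) v = ∑ ν, f ν := by
    simp [hf, ContinuousLinearMap.sum_apply]
  have h4 : ‖(∑ ν, (c ν : ℂ) • Pr ν) v‖^2 ≤ (M * ‖v‖)^2 := by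
    rw [happ, h1]
    calc ∑ ν, ‖f ν‖^2 ≤ M^2 * ∑ ν, ‖Pr ν v‖^2 := h2
    _ = (M * ‖v‖)^2 := by rw [h3]; ring
  nlinarith [norm_nonneg ((∑ ν, (c ν : ℂ) • Pr ν) v), mul_nonneg hM0 (norm_nonneg v)]

end OperatorLemmas

open Gproof in
theorem stmt13 {V : Type*} [NormedAddCommGroup V] [InnerProductSpace ℂ V]
    [FiniteDimensional ℂ V]
    {ι : Type*} [Fintype ι] [DecidableEq ι] (E : ι → ℝ) (Pr : ι → (V →L[ℂ] V))
    (hPsa : ∀ μ, IsSelfAdjoint (Pr μ))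
    (hPidem : ∀ μ, Pr μ * Pr μ = Pr μ)
    (hPorth : ∀ μ ν, μ ≠ ν → Pr μ * Pr ν = 0)
    (hPsum : ∑ μ, Pr μ = 1)
    (H : V →L[ℂ] V) (hH : H = ∑ μ, (E μ : ℂ) • Pr μ)
    (S : Finset ι)
    (γ Δ : ℝ) (hγ : 0 < γ) (hΔ0 : 0 ≤ Δ) (hΔγ : Δ < γ / 4)
    (hwidth : ∀ μ ∈ S, ∀ ν ∈ S, E ν - E μ ≤ Δ)
    (hgap : ∀ μ ∈ S, ∀ ν ∉ S, γ ≤ E ν - E μ)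
    (A : V →L[ℂ] V) (β : ℝ) (hβ : 0 < β) :
    ‖(∑ μ ∈ S, ∑ ν ∈ Sᶜ, Pr μ * A * Pr ν) -
        ∑ μ ∈ S, ∑ ν, G β γ (E ν - E μ) • (Pr μ * A * Pr ν)‖ ≤
      6 * S.card / Real.sqrt π * (β / γ) * Real.exp (-(γ ^ 2 / (64 * β ^ 2))) * ‖A‖ := by
  classical
  set M : ℝ := 6 * (β/γ) / Real.sqrt π * Real.exp (-(γ^2/(64*β^2))) with hMdef
  have hM0 : 0 ≤ M := by rw [hMdef]; positivity
  set c : ι → ι → ℝ := fun μ ν =>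
    if ν ∈ S then -(G β γ (E ν - E μ)) else 1 - G β γ (E ν - E μ) with hc
  set B : ι → (V →L[ℂ] V) := fun μ => ∑ ν, (c μ ν : ℂ) • Pr ν with hB
  -- coefficient bounds
  have hMc : ∀ μ ∈ S, ∀ ν, |c μ ν| ≤ M := by
    intro μ hμ ν
    by_cases hν : ν ∈ S
    · have hle : E ν - E μ ≤ γ/4 := le_of_lt (lt_of_le_of_lt (hwidth μ hμ ν hν) hΔγ)
      have h1 : G β γ (E ν - E μ) ≤ 4 * (β/γ) / Real.sqrt π * Real.exp (-(γ^2/(64*β^2))) :=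
        G_le hβ hγ hle
      have h2 : |c μ ν| = G β γ (E ν - E μ) := by
        rw [hc]; simp only [if_pos hν, abs_neg]
        exact abs_of_nonneg (G_nonneg _ _ _)
      rw [h2, hMdef]
      refine le_trans h1 ?_
      have h0 : (0:ℝ) ≤ (β/γ) / Real.sqrt π * Real.exp (-(γ^2/(64*β^2))) := by positivity
      have e4 : 4 * (β/γ) / Real.sqrt π * Real.exp (-(γ^2/(64*β^2)))
          = 4 * ((β/γ) / Real.sqrt π * Real.exp (-(γ^2/(64*β^2)))) := by ring
      have e6 : 6 * (β/γ) / Real.sqrt π * Real.exp (-(γ^2/(64*β^2)))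
          = 6 * ((β/γ) / Real.sqrt π * Real.exp (-(γ^2/(64*β^2)))) := by ring
      rw [e4, e6]; linarith
    · have hge : γ ≤ E ν - E μ := hgap μ hμ ν hν
      have h1 : 1 - G β γ (E ν - E μ)
          ≤ 2 * (β/γ) / Real.sqrt π * Real.exp (-(γ^2/(64*β^2))) :=
        one_sub_G_le hβ hγ hge
      have h2 : |c μ ν| = 1 - G β γ (E ν - E μ) := by
        rw [hc]; simp only [if_neg hν]
        exact abs_of_nonneg (by linarith [G_le_one β γ (E ν - E μ)])
      rw [h2, hMdef]
      refine le_trans h1 ?_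
      have h0 : (0:ℝ) ≤ (β/γ) / Real.sqrt π * Real.exp (-(γ^2/(64*β^2))) := by positivity
      have e4 : 2 * (β/γ) / Real.sqrt π * Real.exp (-(γ^2/(64*β^2)))
          = 2 * ((β/γ) / Real.sqrt π * Real.exp (-(γ^2/(64*β^2)))) := by ring
      have e6 : 6 * (β/γ) / Real.sqrt π * Real.exp (-(γ^2/(64*β^2)))
          = 6 * ((β/γ) / Real.sqrt π * Real.exp (-(γ^2/(64*β^2)))) := by ring
      rw [e4, e6]; linarith
  -- rearrangement
  have hsmul : ∀ (r : ℝ) (T : V →L[ℂ] V), r • T = (r : ℂ) • T := fun r T =>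
    RCLike.real_smul_eq_coe_smul (K := ℂ) r T
  have hrearr : (∑ μ ∈ S, ∑ ν ∈ Sᶜ, Pr μ * A * Pr ν) -
      (∑ μ ∈ S, ∑ ν, G β γ (E ν - E μ) • (Pr μ * A * Pr ν))
      = ∑ μ ∈ S, (Pr μ * A * B μ) := by
    rw [← Finset.sum_sub_distrib]
    apply Finset.sum_congr rfl
    intro μ hμ
    have hBapp : Pr μ * A * B μ = ∑ ν, (c μ ν : ℂ) • (Pr μ * A * Pr ν) := by
      rw [hB, Finset.mul_sum]
      exact Finset.sum_congr rfl fun ν _ => (mul_smul_comm _ _ _)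
    rw [hBapp,
      ← Finset.sum_add_sum_compl S (fun ν => ((c μ ν : ℂ)) • (Pr μ * A * Pr ν)),
      ← Finset.sum_add_sum_compl S (fun ν => G β γ (E ν - E μ) • (Pr μ * A * Pr ν))]
    have e1 : ∑ ν ∈ S, (c μ ν : ℂ) • (Pr μ * A * Pr ν)
        = -∑ ν ∈ S, G β γ (E ν - E μ) • (Pr μ * A * Pr ν) := by
      rw [← Finset.sum_neg_distrib]
      apply Finset.sum_congr rfl
      intro ν hν
      rw [hsmul, hc]
      simp only [if_pos hν]
      push_cast
      rw [neg_smul]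
    have e2 : ∑ ν ∈ Sᶜ, (c μ ν : ℂ) • (Pr μ * A * Pr ν)
        = (∑ ν ∈ Sᶜ, Pr μ * A * Pr ν)
          - ∑ ν ∈ Sᶜ, G β γ (E ν - E μ) • (Pr μ * A * Pr ν) := by
      rw [← Finset.sum_sub_distrib]
      apply Finset.sum_congr rfl
      intro ν hν
      have hν' : ν ∉ S := by simpa using hν
      rw [hsmul, hc]
      simp only [if_neg hν']
      push_cast
      rw [sub_smul, one_smul]
    rw [e1, e2]
    abel
  rw [hrearr]
  -- norm bound
  have hterm : ∀ μ ∈ S, ‖Pr μ * A * B μ‖ ≤ ‖A‖ * M := by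
    intro μ hμ
    have hBμ : ‖B μ‖ ≤ M := by
      rw [hB]
      exact sum_smul_proj_norm_le Pr hPsa hPorth hPsum (c μ) M hM0 (hMc μ hμ)
    have hPμ : ‖Pr μ‖ ≤ 1 := proj_norm_le (Pr μ) (hPsa μ) (hPidem μ)
    calc ‖Pr μ * A * B μ‖ ≤ ‖Pr μ * A‖ * ‖B μ‖ := norm_mul_le _ _
    _ ≤ ‖Pr μ‖ * ‖A‖ * ‖B μ‖ :=
        mul_le_mul_of_nonneg_right (norm_mul_le _ _) (norm_nonneg _)
    _ ≤ 1 * ‖A‖ * M := by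
        apply mul_le_mul (mul_le_mul_of_nonneg_right hPμ (norm_nonneg _)) hBμ
          (norm_nonneg _) (by positivity)
    _ = ‖A‖ * M := by ring
  calc ‖∑ μ ∈ S, Pr μ * A * B μ‖ ≤ ∑ μ ∈ S, ‖Pr μ * A * B μ‖ := norm_sum_le _ _
  _ ≤ ∑ μ ∈ S, (‖A‖ * M) := Finset.sum_le_sum hterm
  _ = S.card * (‖A‖ * M) := by rw [Finset.sum_const, nsmul_eq_mul]
  _ = 6 * S.card / Real.sqrt π * (β / γ) * Real.exp (-(γ ^ 2 / (64 * β ^ 2))) * ‖A‖ := by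
      rw [hMdef]; ring
end
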